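/- Let p be a prime, let k ≥ 2, let χ be a primitive Dirichlet character modulo p^k, and let a be an integer. Then ∑_{t ∈ ℤ/p^kℤ, t ≡ a (mod p)} χ(t) · conj(χ)(t+1) = 0. -/

import Mathlib

/-- Let p be prime, k ≥ 2, χ a primitive Dirichlet character modulo p^k, and a an integer.
Then ∑_{t ∈ ℤ/p^kℤ, t ≡ a (mod p)} χ(t) · conj(χ)(t+1) = 0. -/
theorem sum_char_LFT_arith_prog (p : ℕ) [Fact p.Prime] (k : ℕ) (hk : 2 ≤ k)
    (χ : DirichletCharacter ℂ (p ^ k)) (hχ : χ.IsPrimitive) (a : ℤ) :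
    ∑ t : ZMod (p ^ k),
      (if (p : ℤ) ∣ ((t.val : ℤ) - a) then χ t * (starRingEnd ℂ) (χ (t + 1)) else 0) = 0 := by
  have hp : p.Prime := Fact.out
  have hk0 : k ≠ 0 := by omega
  haveI : NeZero (p ^ k) := ⟨pow_ne_zero k hp.pos.ne'⟩
  set ε : ZMod (p ^ k) := (p : ZMod (p ^ k)) ^ (k - 1) with hε
  have hpk : ((p : ZMod (p ^ k))) ^ k = 0 := by
    rw [← Nat.cast_pow, ZMod.natCast_self]
  have hε2 : ε * ε = 0 := by
    have h : ε * ε = (p : ZMod (p ^ k)) ^ k * (p : ZMod (p ^ k)) ^ (k - 2) := by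
      rw [hε, ← pow_add, ← pow_add]; congr 1; omega
    rw [h, hpk, zero_mul]
  have hpε : (p : ZMod (p ^ k)) * ε = 0 := by
    have h : (p : ZMod (p ^ k)) * ε = (p : ZMod (p ^ k)) ^ k := by
      rw [hε, ← pow_succ']; congr 1; omega
    rw [h, hpk]
  have hbin : ∀ n : ℕ, (1 + ε) ^ n = 1 + (n : ZMod (p ^ k)) * ε := by
    intro n
    induction n with
    | zero => simp
    | succ n ih =>
      rw [pow_succ, ih]
      push_cast
      linear_combination (n : ZMod (p ^ k)) * hε2
  set ζ : ℂ := χ (1 + ε) with hζdef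
  have hζp : ζ ^ p = 1 := by
    rw [hζdef, ← map_pow, hbin p, hpε, add_zero, map_one]
  have hvalid : ∀ x : ZMod (p ^ k), ((x.val : ℕ) : ZMod (p ^ k)) = x := by
    intro x; rw [ZMod.natCast_val, ZMod.cast_id]
  have hchi1 : ∀ x : ZMod (p ^ k), χ (1 + x * ε) = ζ ^ x.val := by
    intro x
    calc χ (1 + x * ε) = χ ((1 + ε) ^ x.val) := by rw [hbin, hvalid]
      _ = ζ ^ x.val := by rw [map_pow, hζdef]
  -- primitivity implies ζ ≠ 1
  have hζ1 : ζ ≠ 1 := by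
    intro h1
    have hdvd : p ^ (k - 1) ∣ p ^ k := pow_dvd_pow p (by omega)
    have hker : (ZMod.unitsMap hdvd).ker ≤ χ.toUnitHom.ker := by
      intro u hu
      rw [MonoidHom.mem_ker] at hu ⊢
      have hcast : (ZMod.castHom hdvd (ZMod (p ^ (k - 1)))) (↑u : ZMod (p ^ k)) = 1 := by
        have := congrArg (Units.val) hu
        simpa [ZMod.unitsMap] using this
      have h0 : (ZMod.castHom hdvd (ZMod (p ^ (k - 1)))) ((↑u : ZMod (p ^ k)) - 1) = 0 := by
        rw [map_sub, hcast, map_one, sub_self]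
      set w : ZMod (p ^ k) := (↑u : ZMod (p ^ k)) - 1 with hw
      have hval0 : ((w.val : ℕ) : ZMod (p ^ (k - 1))) = 0 := by
        rw [ZMod.natCast_val]
        simpa [ZMod.castHom_apply] using h0
      rw [ZMod.natCast_eq_zero_iff] at hval0
      obtain ⟨m, hm⟩ := hval0
      have hwm : w = (m : ZMod (p ^ k)) * ε := by
        rw [← hvalid w, hm, hε]; push_cast; ring
      have hu1 : (↑u : ZMod (p ^ k)) = 1 + (m : ZMod (p ^ k)) * ε := by
        have : (↑u : ZMod (p ^ k)) = 1 + w := by rw [hw]; ring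
        rw [this, hwm]
      have hχu : χ (↑u : ZMod (p ^ k)) = 1 := by
        rw [hu1, hchi1, h1, one_pow]
      exact Units.ext (by rw [MulChar.coe_toUnitHom, hχu, Units.val_one])
    have hft : χ.FactorsThrough (p ^ (k - 1)) :=
      (DirichletCharacter.factorsThrough_iff_ker_unitsMap hdvd).mpr hker
    have hle : χ.conductor ≤ p ^ (k - 1) :=
      Nat.sInf_le ((DirichletCharacter.mem_conductorSet_iff χ).mpr hft)
    rw [DirichletCharacter.isPrimitive_def] at hχ
    rw [hχ] at hle
    exact absurd hle (not_le.mpr (Nat.pow_lt_pow_right hp.one_lt (by omega)))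
  -- powers of ζ depend only on exponent mod p
  have hpow : ∀ m n : ℕ, ((m : ZMod p) = (n : ZMod p)) → ζ ^ m = ζ ^ n := by
    intro m n h
    rw [ZMod.natCast_eq_natCast_iff] at h
    have key : ∀ m : ℕ, ζ ^ m = ζ ^ (m % p) := by
      intro m
      conv_lhs => rw [← Nat.mod_add_div m p]
      rw [pow_add, pow_mul, hζp, one_pow, mul_one]
    rw [key m, key n, show m % p = n % p from h]
  -- conjugate of ζ
  have hζne : ζ ≠ 0 := by
    intro h0
    rw [h0, zero_pow hp.pos.ne'] at hζp
    exact one_ne_zero hζp.symm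
  have habs : ‖ζ‖ = 1 := by
    have h1 : ‖ζ‖ ^ p = 1 := by rw [← norm_pow, hζp, norm_one]
    have h2 := norm_nonneg ζ
    rcases (pow_eq_one_iff_cases).mp h1 with h | h | h
    · exact absurd h hp.pos.ne'
    · exact h
    · exfalso; rw [h.1] at h2; linarith
  have hconj : (starRingEnd ℂ) ζ = ζ ^ (p - 1) := by
    have hmul : (starRingEnd ℂ) ζ * ζ = 1 := by
      rw [mul_comm, Complex.mul_conj, Complex.normSq_eq_norm_sq, habs]
      norm_num
    have h2 : ζ * ζ ^ (p - 1) = 1 := by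
      rw [← pow_succ', show p - 1 + 1 = p from Nat.succ_pred_eq_of_pos hp.pos, hζp]
    calc (starRingEnd ℂ) ζ = (starRingEnd ℂ) ζ * (ζ * ζ ^ (p - 1)) := by rw [h2, mul_one]
      _ = ((starRingEnd ℂ) ζ * ζ) * ζ ^ (p - 1) := by ring
      _ = ζ ^ (p - 1) := by rw [hmul, one_mul]
  -- the reduction map
  have hdp : p ∣ p ^ k := dvd_pow_self p hk0
  set ν : ZMod (p ^ k) →+* ZMod p := ZMod.castHom hdp (ZMod p) with hνdef
  have hνval : ∀ x : ZMod (p ^ k), ((x.val : ℕ) : ZMod p) = ν x := by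
    intro x; rw [ZMod.natCast_val, hνdef, ZMod.castHom_apply]
  have hνε : ν ε = 0 := by
    rw [hε, map_pow, map_natCast, ZMod.natCast_self, zero_pow (by omega : k - 1 ≠ 0)]
  set A : ZMod p := ((a : ℤ) : ZMod p) with hA
  have hcond : ∀ x : ZMod (p ^ k), ((p : ℤ) ∣ ((x.val : ℤ) - a)) ↔ ν x = A := by
    intro x
    rw [← ZMod.intCast_zmod_eq_zero_iff_dvd, Int.cast_sub, sub_eq_zero, Int.cast_natCast, hνval,
      hA]
  have hunit : ∀ x : ZMod (p ^ k), ν x ≠ 0 → IsUnit x := by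
    intro x hx
    have hx' : ¬ p ∣ x.val := by
      intro hd
      exact hx (by rw [← hνval, ZMod.natCast_eq_zero_iff]; exact hd)
    have h : IsUnit ((x.val : ℕ) : ZMod (p ^ k)) := by
      rw [ZMod.isUnit_iff_coprime]
      exact Nat.Coprime.pow_right k ((Nat.Prime.coprime_iff_not_dvd hp).mpr hx').symm
    rwa [hvalid] at h
  have hunit' : ∀ x : ZMod (p ^ k), IsUnit x → ν x ≠ 0 := by
    intro x hx h0
    have h : IsUnit (ν x) := hx.map ν
    rw [h0] at h
    exact not_isUnit_zero h
  by_cases ha : A = 0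
  · apply Finset.sum_eq_zero
    intro t _
    split_ifs with hC
    · have hnt : ¬ IsUnit t := fun h => hunit' t h (by rw [(hcond t).mp hC, ha])
      rw [χ.map_nonunit hnt, zero_mul]
    · rfl
  by_cases ha1 : A + 1 = 0
  · apply Finset.sum_eq_zero
    intro t _
    split_ifs with hC
    · have hnt : ¬ IsUnit (t + 1) := fun h => hunit' (t + 1) h
        (by rw [map_add, map_one, (hcond t).mp hC, ha1])
      rw [χ.map_nonunit hnt, map_zero, mul_zero]
    · rfl
  -- main case
  set c : ZMod (p ^ k) := ((a * (a + 1) : ℤ) : ZMod (p ^ k)) with hc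
  have hνc : ν c = A * (A + 1) := by
    rw [hc, map_intCast, hA]; push_cast; ring
  have hshift : ∀ x : ZMod (p ^ k), IsUnit x → ∀ b : ZMod p, ν x = b → b ≠ 0 →
      χ (x + c * ε) = χ x * ζ ^ ((b⁻¹ * (A * (A + 1))).val) := by
    intro x hx b hb hb0
    obtain ⟨u, hu⟩ := hx
    have hdecomp : x + c * ε = x * (1 + ((↑u⁻¹ : ZMod (p ^ k)) * c) * ε) := by
      rw [← hu]
      linear_combination (-(c * ε)) * Units.mul_inv u
    have hνinv : ν (↑u⁻¹ : ZMod (p ^ k)) = b⁻¹ := by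
      have h1 : ν (↑u⁻¹ : ZMod (p ^ k)) * ν (↑u : ZMod (p ^ k)) = 1 := by
        rw [← map_mul, Units.inv_mul, map_one]
      rw [hu, hb] at h1
      exact eq_inv_of_mul_eq_one_left h1
    have hexp : ζ ^ ((↑u⁻¹ * c : ZMod (p ^ k)).val) = ζ ^ ((b⁻¹ * (A * (A + 1))).val) := by
      apply hpow
      rw [hνval, map_mul, hνinv, hνc, ZMod.natCast_val, ZMod.cast_id]
    rw [hdecomp, map_mul, hchi1, hexp]
  have hA1v : (((A + 1).val : ℕ) : ZMod p) = A + 1 := by rw [ZMod.natCast_val, ZMod.cast_id]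
  have hAv : ((A.val : ℕ) : ZMod p) = A := by rw [ZMod.natCast_val, ZMod.cast_id]
  have q3 : ζ ^ (A + 1).val * ζ ^ ((p - 1) * A.val) = ζ := by
    rw [← pow_add]
    have h := hpow ((A + 1).val + (p - 1) * A.val) 1 ?_
    · simpa using h
    · push_cast [Nat.cast_sub hp.one_le]
      rw [hA1v, hAv, ZMod.natCast_self]
      ring
  have hpoint : ∀ t : ZMod (p ^ k),
      (if (p : ℤ) ∣ (((t + c * ε).val : ℤ) - a) then
          χ (t + c * ε) * (starRingEnd ℂ) (χ (t + c * ε + 1)) else 0)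
        = ζ * (if (p : ℤ) ∣ ((t.val : ℤ) - a) then χ t * (starRingEnd ℂ) (χ (t + 1)) else 0) := by
    intro t
    have hνshift : ν (t + c * ε) = ν t := by
      rw [map_add, map_mul, hνε, mul_zero, add_zero]
    by_cases hC : (p : ℤ) ∣ ((t.val : ℤ) - a)
    · have hνt : ν t = A := (hcond t).mp hC
      have hC' : (p : ℤ) ∣ (((t + c * ε).val : ℤ) - a) := by
        apply (hcond _).mpr
        rw [hνshift, hνt]
      rw [if_pos hC, if_pos hC']
      have hut : IsUnit t := hunit t (by rw [hνt]; exact ha)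
      have hνt1 : ν (t + 1) = A + 1 := by rw [map_add, map_one, hνt]
      have hut1 : IsUnit (t + 1) := hunit _ (by rw [hνt1]; exact ha1)
      have e1 := hshift t hut A hνt ha
      have e2 := hshift (t + 1) hut1 (A + 1) hνt1 ha1
      have hre : t + c * ε + 1 = (t + 1) + c * ε := by ring
      have q1 : A⁻¹ * (A * (A + 1)) = A + 1 := by field_simp
      have q2 : (A + 1)⁻¹ * (A * (A + 1)) = A := by
        rw [mul_comm A (A + 1), ← mul_assoc, inv_mul_cancel₀ ha1, one_mul]
      rw [hre, e1, e2, q1, q2, map_mul, map_pow, hconj, ← pow_mul]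
      calc χ t * ζ ^ (A + 1).val *
            ((starRingEnd ℂ) (χ (t + 1)) * ζ ^ ((p - 1) * A.val))
          = (χ t * (starRingEnd ℂ) (χ (t + 1))) *
            (ζ ^ (A + 1).val * ζ ^ ((p - 1) * A.val)) := by ring
        _ = ζ * (χ t * (starRingEnd ℂ) (χ (t + 1))) := by rw [q3]; ring
    · have hC' : ¬ (p : ℤ) ∣ (((t + c * ε).val : ℤ) - a) := by
        intro h
        exact hC ((hcond t).mpr (by rw [← hνshift]; exact (hcond _).mp h))
      rw [if_neg hC, if_neg hC', mul_zero]
  have hsum : (∑ t : ZMod (p ^ k),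
      if (p : ℤ) ∣ (((t + c * ε).val : ℤ) - a) then
        χ (t + c * ε) * (starRingEnd ℂ) (χ (t + c * ε + 1)) else 0)
      = ∑ t : ZMod (p ^ k),
        (if (p : ℤ) ∣ ((t.val : ℤ) - a) then χ t * (starRingEnd ℂ) (χ (t + 1)) else 0) := by
    exact (Equiv.addRight (c * ε)).bijective.sum_comp
      (fun t => if (p : ℤ) ∣ ((t.val : ℤ) - a) then χ t * (starRingEnd ℂ) (χ (t + 1)) else 0)
  rw [Finset.sum_congr rfl (fun t _ => hpoint t), ← Finset.mul_sum] at hsum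
  have h0 : (1 - ζ) * (∑ t : ZMod (p ^ k),
      (if (p : ℤ) ∣ ((t.val : ℤ) - a) then χ t * (starRingEnd ℂ) (χ (t + 1)) else 0)) = 0 := by
    linear_combination - hsum
  rcases mul_eq_zero.mp h0 with h | h
  · exact absurd (sub_eq_zero.mp h).symm hζ1
  · exact h
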